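/- Fix a 2×2 real matrix ε and E ∈ ℝ². For a third-order tensor variable g on ℝ², denote by ∂H/∂g_{ijk} the partial derivatives of the function g ↦ H(ε, g, E) (the isotropic electrical enthalpy density), where g ranges over all third-order tensors. Then at any minor-symmetric g, the symmetrized derivative τ_{ijk} := (1/2)(∂H/∂g_{ijk} + ∂H/∂g_{ikj}) equals the higher-order stress τ_{ijk} = (1/2) l² [ λ ( (Σ_n g_{njn}) δ_{ik} + (Σ_n g_{nkn}) δ_{ij} ) + G ( 2 g_{ijk} + g_{jik} + g_{kij} ) ] − f₁ δ_{jk} E_i − f₂ ( δ_{ij} E_k + δ_{ik} E_j ). -/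

import Mathlib

/-- Kronecker delta on `Fin 2`. -/
noncomputable def kd (i j : Fin 2) : ℝ := if i = j then 1 else 0

/-- The isotropic electrical enthalpy density
`H(ε,g,E) = ½λ(ε_ii)² + G ε_ij ε_ij + ½l²[λ g_jij g_kik + G(g_ijk g_ijk + g_ijk g_jik)]
 − e_ijk E_i ε_jk − (f₁ δ_ij δ_kl + f₂(δ_ik δ_jl + δ_il δ_jk)) E_i g_jkl − ½ κ_ij E_i E_j`. -/
noncomputable def enthalpy (lam G l f₁ f₂ : ℝ) (e : Fin 2 → Fin 2 → Fin 2 → ℝ)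
    (κ : Fin 2 → Fin 2 → ℝ) (ε : Fin 2 → Fin 2 → ℝ)
    (g : Fin 2 → Fin 2 → Fin 2 → ℝ) (E : Fin 2 → ℝ) : ℝ :=
  (1/2) * lam * (∑ i, ε i i)^2 + G * ∑ i, ∑ j, (ε i j)^2
    + (1/2) * l^2 *
        (lam * ∑ i, (∑ j, g j i j) * (∑ k, g k i k)
          + G * ((∑ i, ∑ j, ∑ k, (g i j k)^2) + ∑ i, ∑ j, ∑ k, g i j k * g j i k))
    - (∑ i, ∑ j, ∑ k, e i j k * E i * ε j k)
    - (∑ i, ∑ j, ∑ k, ∑ m,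
        (f₁ * kd i j * kd k m + f₂ * (kd i k * kd j m + kd i m * kd j k)) * E i * g j k m)
    - (1/2) * ∑ i, ∑ j, κ i j * E i * E j

/-- The unit third-order tensor in the `(i,j,k)` slot, used as the direction for the
partial derivative `∂H/∂g_{ijk}`. -/
noncomputable def unitTensor (i j k : Fin 2) : Fin 2 → Fin 2 → Fin 2 → ℝ :=
  fun a b c => if a = i ∧ b = j ∧ c = k then 1 else 0

/-- Evaluation of a third-order tensor at `(a,b,c)`, as a continuous linear map. -/
noncomputable def ev (a b c : Fin 2) : (Fin 2 → Fin 2 → Fin 2 → ℝ) →L[ℝ] ℝ :=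
  (ContinuousLinearMap.proj c : (Fin 2 → ℝ) →L[ℝ] ℝ).comp
    ((ContinuousLinearMap.proj b : (Fin 2 → Fin 2 → ℝ) →L[ℝ] (Fin 2 → ℝ)).comp
      (ContinuousLinearMap.proj a : (Fin 2 → Fin 2 → Fin 2 → ℝ) →L[ℝ] (Fin 2 → Fin 2 → ℝ)))

lemma ev_apply (a b c : Fin 2) (v : Fin 2 → Fin 2 → Fin 2 → ℝ) : ev a b c v = v a b c := rfl

/-- for fixed `ε` and `E`, the function `g ↦ H(ε,g,E)` is differentiable, and
at any minor-symmetric `g` the symmetrized derivative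
`τ_ijk = ½(∂H/∂g_ijk + ∂H/∂g_ikj)` equals the higher-order stress
`τ_ijk = ½ l² [λ(g_njn δ_ik + g_nkn δ_ij) + G(2g_ijk + g_jik + g_kij)]
  − f₁ δ_jk E_i − f₂ (δ_ij E_k + δ_ik E_j)`. -/
theorem higher_order_stress_constitutive_relation
    (lam G l f₁ f₂ : ℝ) (e : Fin 2 → Fin 2 → Fin 2 → ℝ) (κ : Fin 2 → Fin 2 → ℝ)
    (ε : Fin 2 → Fin 2 → ℝ) (E : Fin 2 → ℝ)
    (g : Fin 2 → Fin 2 → Fin 2 → ℝ) (hg : ∀ i j k, g i j k = g i k j) :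
    DifferentiableAt ℝ (fun g' => enthalpy lam G l f₁ f₂ e κ ε g' E) g ∧
    ∀ i j k,
      (1/2) * (fderiv ℝ (fun g' => enthalpy lam G l f₁ f₂ e κ ε g' E) g (unitTensor i j k)
          + fderiv ℝ (fun g' => enthalpy lam G l f₁ f₂ e κ ε g' E) g (unitTensor i k j))
        = (1/2) * l^2 *
            (lam * ((∑ n, g n j n) * kd i k + (∑ n, g n k n) * kd i j)
              + G * (2 * g i j k + g j i k + g k i j))
          - f₁ * kd j k * E i - f₂ * (kd i j * E k + kd i k * E j) := by
  have hev : ∀ a b c : Fin 2,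
      HasFDerivAt (fun g' : Fin 2 → Fin 2 → Fin 2 → ℝ => g' a b c) (ev a b c) g :=
    fun a b c => (ev a b c).hasFDerivAt
  have hS : ∀ i : Fin 2, HasFDerivAt (fun g' : Fin 2 → Fin 2 → Fin 2 → ℝ => ∑ j, g' j i j)
      (∑ j, ev j i j) g := fun i => HasFDerivAt.fun_sum (fun j _ => hev j i j)
  have hsq : ∀ a b c : Fin 2,
      HasFDerivAt (fun g' : Fin 2 → Fin 2 → Fin 2 → ℝ => (g' a b c)^2)
        ((((2:ℕ):ℝ) * g a b c ^ 1) • ev a b c) g :=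
    fun a b c => by
      have := (hasDerivAt_pow 2 (g a b c)).comp_hasFDerivAt g (hev a b c); exact this
  have H : HasFDerivAt (fun g' => enthalpy lam G l f₁ f₂ e κ ε g' E)
      (0 + 0
        + ((1/2) * l^2) •
            (lam • (∑ i : Fin 2, ((∑ j, g j i j) • (∑ j, ev j i j)
                + (∑ j, g j i j) • (∑ j, ev j i j)))
              + G • ((∑ i : Fin 2, ∑ j : Fin 2, ∑ k : Fin 2,
                    (((2:ℕ):ℝ) * g i j k ^ 1) • ev i j k)
                + ∑ i : Fin 2, ∑ j : Fin 2, ∑ k : Fin 2,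
                    (g i j k • ev j i k + g j i k • ev i j k)))
        - 0
        - ∑ i : Fin 2, ∑ j : Fin 2, ∑ k : Fin 2, ∑ m : Fin 2,
            ((f₁ * kd i j * kd k m + f₂ * (kd i k * kd j m + kd i m * kd j k)) * E i) • ev j k m
        - 0) g := by
    exact (((((hasFDerivAt_const _ _).add (hasFDerivAt_const _ _)).add
        ((((HasFDerivAt.fun_sum (fun i _ => (hS i).fun_mul (hS i))).const_mul lam).add
          (((HasFDerivAt.fun_sum (fun i _ => HasFDerivAt.fun_sum (fun j _ => HasFDerivAt.fun_sum
              (fun k _ => hsq i j k)))).add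
            (HasFDerivAt.fun_sum (fun i _ => HasFDerivAt.fun_sum (fun j _ => HasFDerivAt.fun_sum
              (fun k _ => (hev i j k).fun_mul (hev j i k)))))).const_mul G)).const_mul _)).sub
        (hasFDerivAt_const _ _)).sub
        (HasFDerivAt.fun_sum (fun i _ => HasFDerivAt.fun_sum (fun j _ => HasFDerivAt.fun_sum
          (fun k _ => HasFDerivAt.fun_sum (fun m _ => (hev j k m).const_mul _)))))).sub
        (hasFDerivAt_const _ _)
  refine ⟨H.differentiableAt, fun i j k => ?_⟩
  rw [H.fderiv]
  have e0 : g 0 1 0 = g 0 0 1 := (hg 0 0 1).symm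
  have e1 : g 1 1 0 = g 1 0 1 := (hg 1 0 1).symm
  simp only [ContinuousLinearMap.sub_apply, ContinuousLinearMap.add_apply,
    ContinuousLinearMap.smul_apply, ContinuousLinearMap.sum_apply,
    ContinuousLinearMap.zero_apply, ev_apply, smul_eq_mul, Fin.sum_univ_two]
  fin_cases i <;> fin_cases j <;> fin_cases k
  all_goals norm_num [unitTensor, kd, Fin.mk_zero, Fin.mk_one]
  all_goals (try (simp only [e0, e1]))
  all_goals ring
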